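/- Let K be a {Φ∪Σ,Δ}-field and let A_1,…,A_q ∈ GL_n(K), B_1,…,B_m ∈ M_n(K), C_1,…,C_r ∈ GL_n(K) satisfy all of the integrability conditions: φ_j(A_i)A_j = φ_i(A_j)A_i for all 1 ≤ i,j ≤ q; φ_j(B_i)A_j = ∂_i(A_j) + A_jB_i for all 1 ≤ i ≤ m, 1 ≤ j ≤ q; ∂_j(B_i) − ∂_i(B_j) = [B_j,B_i] for all 1 ≤ i,j ≤ m; φ_j(C_i)A_j = σ_i(A_j)C_i for all 1 ≤ i ≤ r, 1 ≤ j ≤ q; σ_j(B_i)C_j = ∂_i(C_j) + C_jB_i for all 1 ≤ i ≤ m, 1 ≤ j ≤ r; and σ_j(C_i)C_j = σ_i(C_j)C_i for all 1 ≤ i,j ≤ r. Then there exist a {Φ∪Σ,Δ}-field extension L of K and a matrix Z ∈ GL_n(L) such that φ_j(Z) = A_jZ for all 1 ≤ j ≤ q, ∂_i(Z) = B_iZ for all 1 ≤ i ≤ m, and σ_k(Z) = C_kZ for all 1 ≤ k ≤ r. -/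

import Mathlib

/-- A `{Φ∪Σ,Δ}`-field structure on a field `L`: commuting automorphisms
`φ_1,…,φ_q` and `σ_1,…,σ_r` together with derivations `∂_1,…,∂_m`, all of
which pairwise commute. -/
structure PhiSigmaDeltaField (q r m : ℕ) (L : Type*) [Field L] where
  φ : Fin q → L ≃+* L
  σ : Fin r → L ≃+* L
  der : Fin m → L → L
  der_add : ∀ i x y, der i (x + y) = der i x + der i y
  der_mul : ∀ i x y, der i (x * y) = der i x * y + x * der i y
  comm_φφ : ∀ i j x, φ i (φ j x) = φ j (φ i x)
  comm_φσ : ∀ i j x, φ i (σ j x) = σ j (φ i x)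
  comm_σσ : ∀ i j x, σ i (σ j x) = σ j (σ i x)
  comm_φder : ∀ i j x, φ i (der j x) = der j (φ i x)
  comm_σder : ∀ i j x, σ i (der j x) = der j (σ i x)
  comm_derder : ∀ i j x, der i (der j x) = der j (der i x)

open MvPolynomial

namespace Stmt6Aux

variable {K : Type} [Field K] {σ : Type}

section MapDer

variable (d : K → K)

/-- Apply `d` to all coefficients of a multivariate polynomial. -/
noncomputable def mapDer (p : MvPolynomial σ K) : MvPolynomial σ K :=
  Finsupp.sum (AddMonoidAlgebra.coeff p) fun s a => monomial s (d a)

variable (hadd : ∀ x y, d (x + y) = d x + d y)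
include hadd

theorem d_zero : d 0 = 0 := by
  have := hadd 0 0
  simp only [add_zero] at this
  exact (left_eq_add.mp this).symm ▸ rfl

theorem mapDer_monomial (s : σ →₀ ℕ) (a : K) :
    mapDer d (monomial s a) = monomial s (d a) := by
  refine MvPolynomial.sum_monomial_eq ?_
  rw [d_zero d hadd, monomial_zero]

theorem mapDer_C (a : K) : mapDer d (C a : MvPolynomial σ K) = C (d a) := by
  simpa using mapDer_monomial d hadd 0 a

theorem mapDer_add (p q : MvPolynomial σ K) :
    mapDer d (p + q) = mapDer d p + mapDer d q := by
  classical
  unfold mapDer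
  rw [AddMonoidAlgebra.coeff_add]
  refine Finsupp.sum_add_index' (fun s => ?_) (fun s x y => ?_)
  · rw [d_zero d hadd, monomial_zero]
  · rw [hadd, map_add]

variable (hmul : ∀ x y, d (x * y) = d x * y + x * d y)
include hmul

omit hadd in
theorem d_one : d 1 = 0 := by
  have := hmul 1 1
  simp only [one_mul, mul_one] at this
  exact (left_eq_add.mp this)

theorem mapDer_X (v : σ) : mapDer d (X v : MvPolynomial σ K) = 0 := by
  rw [X, mapDer_monomial d hadd, d_one d hmul, monomial_zero]

theorem mapDer_mul (p q : MvPolynomial σ K) :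
    mapDer d (p * q) = mapDer d p * q + p * mapDer d q := by
  induction p using MvPolynomial.induction_on' with
  | monomial s a =>
    induction q using MvPolynomial.induction_on' with
    | monomial t b =>
      rw [monomial_mul, mapDer_monomial d hadd, mapDer_monomial d hadd,
        mapDer_monomial d hadd, hmul, map_add, monomial_mul, monomial_mul]
    | add p q hp hq =>
      rw [mul_add, mapDer_add d hadd, hp, hq, mapDer_add d hadd, mul_add, add_add_add_comm, mul_add]
  | add p q hp hq =>
    rw [add_mul, mapDer_add d hadd, hp, hq, mapDer_add d hadd, add_mul, add_add_add_comm, add_mul]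

end MapDer

section FullDer

variable (d : K → K) (c : σ → MvPolynomial σ K)

/-- The derivation on `MvPolynomial σ K` acting by `d` on coefficients and sending
`X v` to `c v`. -/
noncomputable def fullDer (p : MvPolynomial σ K) : MvPolynomial σ K :=
  mapDer d p + MvPolynomial.mkDerivation K c p

variable (hadd : ∀ x y, d (x + y) = d x + d y)
  (hmul : ∀ x y, d (x * y) = d x * y + x * d y)
include hadd

theorem fullDer_add (p q : MvPolynomial σ K) :
    fullDer d c (p + q) = fullDer d c p + fullDer d c q := by
  unfold fullDer
  rw [mapDer_add d hadd, map_add]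
  ring

theorem fullDer_C (a : K) : fullDer d c (C a) = C (d a) := by
  unfold fullDer
  have h0 : MvPolynomial.mkDerivation (σ := σ) K c (C a) = 0 := by
    have := Derivation.map_algebraMap (MvPolynomial.mkDerivation (σ := σ) K c) a
    simpa [MvPolynomial.algebraMap_eq] using this
  rw [mapDer_C d hadd, h0, add_zero]

include hmul

theorem fullDer_X (v : σ) : fullDer d c (X v) = c v := by
  unfold fullDer
  rw [mapDer_X d hadd hmul, MvPolynomial.mkDerivation_X, zero_add]

theorem fullDer_mul (p q : MvPolynomial σ K) :
    fullDer d c (p * q) = fullDer d c p * q + p * fullDer d c q := by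
  unfold fullDer
  rw [mapDer_mul d hadd hmul, Derivation.leibniz, smul_eq_mul, smul_eq_mul]
  ring

omit hadd hmul

end FullDer

section Gen

variable {n : ℕ}

/-- The generic matrix of indeterminates. -/
noncomputable def Xm (K : Type) [Field K] (n : ℕ) :
    Matrix (Fin n) (Fin n) (MvPolynomial (Fin n × Fin n) K) :=
  Matrix.of fun a b => X (a, b)

/-- `M.map C * Xm`, the generic image matrix. -/
noncomputable def gm (M : Matrix (Fin n) (Fin n) K) :
    Matrix (Fin n) (Fin n) (MvPolynomial (Fin n × Fin n) K) :=
  M.map C * Xm K n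

/-- The twisted endomorphism of the polynomial ring determined by a ring
endomorphism `e` of `K` and a matrix `M`, sending the generic matrix `Xm` to
`M.map C * Xm` and acting by `e` on coefficients. -/
noncomputable def phiHat (e : K →+* K) (M : Matrix (Fin n) (Fin n) K) :
    MvPolynomial (Fin n × Fin n) K →+* MvPolynomial (Fin n × Fin n) K :=
  eval₂Hom (C.comp e) fun v => gm M v.1 v.2

theorem phiHat_C (e : K →+* K) (M : Matrix (Fin n) (Fin n) K) (a : K) :
    phiHat e M (C a) = C (e a) := by
  simp [phiHat]

theorem phiHat_X (e : K →+* K) (M : Matrix (Fin n) (Fin n) K) (v : Fin n × Fin n) :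
    phiHat e M (X v) = gm M v.1 v.2 := by
  simp [phiHat]

theorem phiHat_Xm (e : K →+* K) (M : Matrix (Fin n) (Fin n) K) :
    (Xm K n).map (phiHat e M) = gm M := by
  refine Matrix.ext fun a b => ?_
  exact phiHat_X e M (a, b)

theorem phiHat_constMat (e : K →+* K) (M : Matrix (Fin n) (Fin n) K)
    (N : Matrix (Fin n) (Fin n) K) :
    (N.map C).map (phiHat e M) = (N.map e).map C := by
  rw [Matrix.map_map, Matrix.map_map]
  refine Matrix.ext fun a b => ?_
  exact phiHat_C e M (N a b)

theorem phiHat_genMat (e : K →+* K) (M N : Matrix (Fin n) (Fin n) K) :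
    (gm N).map (phiHat e M) = gm (N.map e * M) := by
  unfold gm
  rw [Matrix.map_mul (f := phiHat e M), phiHat_constMat, phiHat_Xm, gm, ← mul_assoc,
    ← Matrix.map_mul]

theorem phiHat_comp (e₁ e₂ : K →+* K) (M₁ M₂ : Matrix (Fin n) (Fin n) K) :
    (phiHat e₂ M₂).comp (phiHat e₁ M₁) = phiHat (e₂.comp e₁) (M₁.map e₂ * M₂) := by
  apply MvPolynomial.ringHom_ext
  · intro a
    simp [phiHat_C]
  · intro v
    have h1 : (phiHat e₂ M₂).comp (phiHat e₁ M₁) (X v)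
        = ((gm M₁).map (phiHat e₂ M₂)) v.1 v.2 := by
      rw [RingHom.comp_apply, phiHat_X]; rfl
    rw [h1, phiHat_genMat, phiHat_X]

theorem gm_one : gm (1 : Matrix (Fin n) (Fin n) K) = Xm K n := by
  unfold gm
  rw [Matrix.map_one C (map_zero C) (map_one C), one_mul]

theorem phiHat_id : phiHat (RingHom.id K) (1 : Matrix (Fin n) (Fin n) K)
    = RingHom.id (MvPolynomial (Fin n × Fin n) K) := by
  apply MvPolynomial.ringHom_ext
  · intro a
    simp [phiHat_C]
  · intro v
    rw [phiHat_X, gm_one]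
    rfl


section DerHat

variable (d : K → K) (Bm : Matrix (Fin n) (Fin n) K)

/-- The twisted derivation determined by the coefficient derivation `d` and the
matrix `Bm`, sending `Xm` to `Bm.map C * Xm`. -/
noncomputable def derHat : MvPolynomial (Fin n × Fin n) K → MvPolynomial (Fin n × Fin n) K :=
  fullDer d fun v => gm Bm v.1 v.2

variable (hadd : ∀ x y, d (x + y) = d x + d y)
  (hmul : ∀ x y, d (x * y) = d x * y + x * d y)
include hadd

theorem derHat_add (p q : MvPolynomial (Fin n × Fin n) K) :
    derHat d Bm (p + q) = derHat d Bm p + derHat d Bm q :=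
  fullDer_add d _ hadd p q

theorem derHat_C (a : K) : derHat d Bm (C a) = C (d a) :=
  fullDer_C d _ hadd a

include hmul

theorem derHat_mul (p q : MvPolynomial (Fin n × Fin n) K) :
    derHat d Bm (p * q) = derHat d Bm p * q + p * derHat d Bm q :=
  fullDer_mul d _ hadd hmul p q

theorem derHat_X (v : Fin n × Fin n) : derHat d Bm (X v) = gm Bm v.1 v.2 :=
  fullDer_X d _ hadd hmul v

theorem derHat_Xm : (Xm K n).map (derHat d Bm) = gm Bm := by
  refine Matrix.ext fun a b => ?_
  exact derHat_X d Bm hadd hmul (a, b)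

theorem derHat_constMat (N : Matrix (Fin n) (Fin n) K) :
    (N.map C).map (derHat d Bm) = (N.map d).map C := by
  rw [Matrix.map_map, Matrix.map_map]
  refine Matrix.ext fun a b => ?_
  exact derHat_C d Bm hadd (N a b)

omit hadd hmul in
theorem der_matMul (D : MvPolynomial (Fin n × Fin n) K → MvPolynomial (Fin n × Fin n) K)
    (haddD : ∀ x y, D (x + y) = D x + D y)
    (hmulD : ∀ x y, D (x * y) = D x * y + x * D y)
    (P Q : Matrix (Fin n) (Fin n) (MvPolynomial (Fin n × Fin n) K)) :
    (P * Q).map D = P.map D * Q + P * Q.map D := by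
  refine Matrix.ext fun a b => ?_
  have hD : D ((P * Q) a b) = (AddMonoidHom.mk' D haddD) (∑ c, P a c * Q c b) := by
    rw [Matrix.mul_apply]; rfl
  rw [Matrix.map_apply, hD, map_sum, Matrix.add_apply, Matrix.mul_apply, Matrix.mul_apply,
    ← Finset.sum_add_distrib]
  refine Finset.sum_congr rfl fun c _ => ?_
  simp only [AddMonoidHom.mk'_apply, Matrix.map_apply]
  exact hmulD _ _

omit hadd hmul in
theorem gm_add (N P : Matrix (Fin n) (Fin n) K) : gm (N + P) = gm N + gm P := by
  unfold gm
  rw [Matrix.map_add C (fun x y => map_add C x y), add_mul]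

omit hadd hmul in
theorem gm_mulC (N : Matrix (Fin n) (Fin n) K) (P : Matrix (Fin n) (Fin n) K) :
    gm (N * P) = N.map C * gm P := by
  unfold gm
  rw [Matrix.map_mul (f := C), mul_assoc]

theorem derHat_genMat (N : Matrix (Fin n) (Fin n) K) :
    (gm N).map (derHat d Bm) = gm (N.map d + N * Bm) := by
  have h1 : (gm N).map (derHat d Bm)
      = (N.map C).map (derHat d Bm) * Xm K n + N.map C * (Xm K n).map (derHat d Bm) := by
    unfold gm
    exact der_matMul (derHat d Bm) (fun x y => derHat_add d Bm hadd x y)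
      (fun x y => derHat_mul d Bm hadd hmul x y) _ _
  rw [h1, derHat_constMat d Bm hadd hmul, derHat_Xm d Bm hadd hmul, gm_add, gm_mulC]
  rfl

end DerHat

section Comm

variable (e : K →+* K) (M : Matrix (Fin n) (Fin n) K)
  (d : K → K) (Bm : Matrix (Fin n) (Fin n) K)
  (hadd : ∀ x y, d (x + y) = d x + d y)
  (hmul : ∀ x y, d (x * y) = d x * y + x * d y)
include hadd hmul

theorem phiHat_derHat_comm
    (hcomm : ∀ a, e (d a) = d (e a))
    (hmat : Bm.map e * M = M.map d + M * Bm) (p : MvPolynomial (Fin n × Fin n) K) :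
    phiHat e M (derHat d Bm p) = derHat d Bm (phiHat e M p) := by
  have key : ∀ v : Fin n × Fin n,
      phiHat e M (derHat d Bm (X v)) = derHat d Bm (phiHat e M (X v)) := by
    intro v
    rw [derHat_X d Bm hadd hmul, phiHat_X]
    have h1 : phiHat e M (gm Bm v.1 v.2) = ((gm Bm).map (phiHat e M)) v.1 v.2 := rfl
    have h2 : derHat d Bm (gm M v.1 v.2) = ((gm M).map (derHat d Bm)) v.1 v.2 := rfl
    rw [h1, h2, phiHat_genMat, derHat_genMat d Bm hadd hmul, hmat]
  induction p using MvPolynomial.induction_on with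
  | C a => rw [derHat_C d Bm hadd, phiHat_C, phiHat_C, derHat_C d Bm hadd, hcomm]
  | add p q hp hq =>
    rw [derHat_add d Bm hadd, map_add, map_add, hp, hq, derHat_add d Bm hadd]
  | mul_X p v hp =>
    rw [derHat_mul d Bm hadd hmul, map_add, map_mul, map_mul, map_mul,
      derHat_mul d Bm hadd hmul, hp, key v]

theorem derHat_derHat_comm (d' : K → K) (Bm' : Matrix (Fin n) (Fin n) K)
    (hadd' : ∀ x y, d' (x + y) = d' x + d' y)
    (hmul' : ∀ x y, d' (x * y) = d' x * y + x * d' y)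
    (hcomm : ∀ a, d (d' a) = d' (d a))
    (hmat : Bm'.map d + Bm' * Bm = Bm.map d' + Bm * Bm')
    (p : MvPolynomial (Fin n × Fin n) K) :
    derHat d Bm (derHat d' Bm' p) = derHat d' Bm' (derHat d Bm p) := by
  have key : ∀ v : Fin n × Fin n,
      derHat d Bm (derHat d' Bm' (X v)) = derHat d' Bm' (derHat d Bm (X v)) := by
    intro v
    rw [derHat_X d' Bm' hadd' hmul', derHat_X d Bm hadd hmul]
    have h1 : derHat d Bm (gm Bm' v.1 v.2) = ((gm Bm').map (derHat d Bm)) v.1 v.2 := rfl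
    have h2 : derHat d' Bm' (gm Bm v.1 v.2) = ((gm Bm).map (derHat d' Bm')) v.1 v.2 := rfl
    rw [h1, h2, derHat_genMat d Bm hadd hmul, derHat_genMat d' Bm' hadd' hmul', hmat]
  induction p using MvPolynomial.induction_on with
  | C a => rw [derHat_C d' Bm' hadd', derHat_C d Bm hadd, derHat_C d Bm hadd,
      derHat_C d' Bm' hadd', hcomm]
  | add p q hp hq =>
    rw [derHat_add d' Bm' hadd', derHat_add d Bm hadd, derHat_add d Bm hadd, hp, hq,
      derHat_add d' Bm' hadd']
  | mul_X p v hp =>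
    rw [derHat_mul d' Bm' hadd' hmul' p (X v), derHat_add d Bm hadd,
      derHat_mul d Bm hadd hmul (derHat d' Bm' p) (X v),
      derHat_mul d Bm hadd hmul p (derHat d' Bm' (X v)),
      derHat_mul d Bm hadd hmul p (X v), derHat_add d' Bm' hadd',
      derHat_mul d' Bm' hadd' hmul' (derHat d Bm p) (X v),
      derHat_mul d' Bm' hadd' hmul' p (derHat d Bm (X v)), hp, key v]
    ring

end Comm

end Gen


section Frac

variable (R : Type) [CommRing R] [IsDomain R]

local notation "F" => FractionRing R

variable (D : R → R) (haddD : ∀ x y, D (x + y) = D x + D y)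
  (hmulD : ∀ x y, D (x * y) = D x * y + x * D y)
include haddD hmulD

theorem D_zero' : D 0 = 0 := by
  have := haddD 0 0
  simp only [add_zero] at this
  exact (left_eq_add.mp this)

theorem D_one' : D 1 = 0 := by
  have := hmulD 1 1
  simp only [one_mul, mul_one] at this
  exact (left_eq_add.mp this)

/-- The ring homomorphism `R →+* F[ε]`, `p ↦ (p, D p)`. -/
noncomputable def derToDual : R →+* DualNumber F where
  toFun p := (algebraMap R F p, algebraMap R F (D p))
  map_one' := by
    refine TrivSqZeroExt.ext ?_ ?_
    · simp [TrivSqZeroExt.fst_one]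
    · simp [TrivSqZeroExt.snd_one, D_one' R D haddD hmulD]
  map_mul' x y := by
    refine TrivSqZeroExt.ext ?_ ?_
    · simp [TrivSqZeroExt.fst_mul]
      rfl
    · simp only [TrivSqZeroExt.snd_mul, TrivSqZeroExt.fst_mul, hmulD, map_add, map_mul,
        TrivSqZeroExt.snd_mk, TrivSqZeroExt.fst_mk, smul_eq_mul, op_smul_eq_mul]
      rw [add_comm]
      rfl
  map_zero' := by
    refine TrivSqZeroExt.ext ?_ ?_
    · simp
    · simp [D_zero' R D haddD hmulD]
  map_add' x y := by
    refine TrivSqZeroExt.ext ?_ ?_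
    · simp [TrivSqZeroExt.fst_add]
      rfl
    · simp [TrivSqZeroExt.snd_add, haddD]
      rfl

theorem derToDual_units (y : nonZeroDivisors R) : IsUnit (derToDual R D haddD hmulD y) := by
  rw [TrivSqZeroExt.isUnit_iff_isUnit_fst]
  exact IsLocalization.map_units F y

/-- The lifted homomorphism `F →+* F[ε]`. -/
noncomputable def derDualLift : F →+* DualNumber F :=
  IsLocalization.lift (M := nonZeroDivisors R) (derToDual_units R D haddD hmulD)

theorem derDualLift_algebraMap (p : R) :
    derDualLift R D haddD hmulD (algebraMap R F p) = derToDual R D haddD hmulD p :=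
  IsLocalization.lift_eq _ _

theorem derDualLift_fst (x : F) : (derDualLift R D haddD hmulD x).fst = x := by
  have h : (TrivSqZeroExt.fstHom F F F).toRingHom.comp (derDualLift R D haddD hmulD)
      = RingHom.id F := by
    refine IsLocalization.ringHom_ext (nonZeroDivisors R) ?_
    ext p
    simp [derDualLift_algebraMap R D haddD hmulD p, derToDual]
    rfl
  exact congrArg (fun f => f x) (congrArg DFunLike.coe h)

/-- The lifted derivation on the fraction field. -/
noncomputable def liftDer : F → F := fun x => (derDualLift R D haddD hmulD x).snd

theorem liftDer_algebraMap (p : R) :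
    liftDer R D haddD hmulD (algebraMap R F p) = algebraMap R F (D p) := by
  unfold liftDer
  rw [derDualLift_algebraMap]
  rfl

theorem liftDer_add (x y : F) : liftDer R D haddD hmulD (x + y)
    = liftDer R D haddD hmulD x + liftDer R D haddD hmulD y := by
  unfold liftDer
  rw [RingHom.map_add (derDualLift R D haddD hmulD) x y, TrivSqZeroExt.snd_add]

theorem liftDer_mul (x y : F) : liftDer R D haddD hmulD (x * y)
    = liftDer R D haddD hmulD x * y + x * liftDer R D haddD hmulD y := by
  unfold liftDer
  rw [RingHom.map_mul (derDualLift R D haddD hmulD) x y, TrivSqZeroExt.snd_mul]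
  rw [derDualLift_fst, derDualLift_fst]
  rw [smul_eq_mul, op_smul_eq_mul]
  ring

omit haddD hmulD in
/-- Two derivation-like maps on the fraction field agreeing on `R` agree. -/
theorem frac_der_ext (D₁ D₂ : F → F)
    (h1m : ∀ u v, D₁ (u * v) = D₁ u * v + u * D₁ v)
    (h2m : ∀ u v, D₂ (u * v) = D₂ u * v + u * D₂ v)
    (hagree : ∀ p : R, D₁ (algebraMap R F p) = D₂ (algebraMap R F p)) (x : F) :
    D₁ x = D₂ x := by
  obtain ⟨⟨a, s⟩, h⟩ := IsLocalization.surj (nonZeroDivisors R) x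
  have hs0 : algebraMap R F (s : R) ≠ 0 := (IsLocalization.map_units F s).ne_zero
  have key : ∀ Dx : F → F, (∀ u v, Dx (u * v) = Dx u * v + u * Dx v) →
      Dx x * algebraMap R F (s : R)
        = Dx (algebraMap R F a) - x * Dx (algebraMap R F (s : R)) := by
    intro Dx hm
    have h2 := hm x (algebraMap R F (s : R))
    rw [h] at h2
    rw [show ((a, s).1 : R) = a from rfl] at h2
    rw [h2]
    ring
  have e1 := key D₁ h1m
  have e2 := key D₂ h2m
  rw [hagree, hagree] at e1
  have : D₁ x * algebraMap R F (s : R) = D₂ x * algebraMap R F (s : R) := by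
    rw [e1, e2]
  exact mul_right_cancel₀ hs0 this

omit haddD hmulD in
/-- Two ring endomorphisms of the fraction field agreeing on `R` agree. -/
theorem frac_hom_ext (f g : F →+* F)
    (hagree : ∀ p : R, f (algebraMap R F p) = g (algebraMap R F p)) (x : F) : f x = g x := by
  have h : f = g := by
    refine IsLocalization.ringHom_ext (nonZeroDivisors R) ?_
    ext p
    exact hagree p
  rw [h]

end Frac


section Equiv

variable {n : ℕ}

theorem phiHat_commute (e₁ e₂ : K →+* K) (M₁ M₂ : Matrix (Fin n) (Fin n) K)
    (he : e₂.comp e₁ = e₁.comp e₂) (hM : M₁.map e₂ * M₂ = M₂.map e₁ * M₁)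
    (p : MvPolynomial (Fin n × Fin n) K) :
    phiHat e₂ M₂ (phiHat e₁ M₁ p) = phiHat e₁ M₁ (phiHat e₂ M₂ p) := by
  have h : (phiHat e₂ M₂).comp (phiHat e₁ M₁) = (phiHat e₁ M₁).comp (phiHat e₂ M₂) := by
    rw [phiHat_comp, phiHat_comp, he, hM]
  exact DFunLike.congr_fun h p

/-- The ring automorphism of the polynomial ring determined by an automorphism
`e` of `K` and an invertible matrix `M`. -/
noncomputable def phiEquiv (e : K ≃+* K) (M : Matrix (Fin n) (Fin n) K) (hM : IsUnit M) :
    MvPolynomial (Fin n × Fin n) K ≃+* MvPolynomial (Fin n × Fin n) K := by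
  have hdet : IsUnit M.det := (Matrix.isUnit_iff_isUnit_det M).mp hM
  have hL : (phiHat (e.symm : K →+* K) ((M⁻¹).map ⇑(e.symm : K →+* K))).comp (phiHat (e : K →+* K) M)
      = RingHom.id (MvPolynomial (Fin n × Fin n) K) := by
    rw [phiHat_comp]
    have h1 : (e.symm : K →+* K).comp (e : K →+* K) = RingHom.id K := by
      ext a; exact e.symm_apply_apply a
    have h2 : M.map ⇑(e.symm : K →+* K) * (M⁻¹).map ⇑(e.symm : K →+* K) = 1 := by
      rw [← Matrix.map_mul (f := (e.symm : K →+* K)), Matrix.mul_nonsing_inv M hdet,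
        Matrix.map_one _ (map_zero _) (map_one _)]
    rw [h1, h2, phiHat_id]
  have hR : (phiHat (e : K →+* K) M).comp (phiHat (e.symm : K →+* K) ((M⁻¹).map ⇑(e.symm : K →+* K)))
      = RingHom.id (MvPolynomial (Fin n × Fin n) K) := by
    rw [phiHat_comp]
    have h1 : (e : K →+* K).comp (e.symm : K →+* K) = RingHom.id K := by
      ext a; exact e.apply_symm_apply a
    have h2 : ((M⁻¹).map ⇑(e.symm : K →+* K)).map ⇑(e : K →+* K) * M = 1 := by
      rw [Matrix.map_map]
      have : (⇑(e : K →+* K) ∘ ⇑(e.symm : K →+* K)) = id := by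
        funext a; exact e.apply_symm_apply a
      rw [this, Matrix.map_id, Matrix.nonsing_inv_mul M hdet]
    rw [h1, h2, phiHat_id]
  exact RingEquiv.ofRingHom (phiHat (e : K →+* K) M)
    (phiHat (e.symm : K →+* K) ((M⁻¹).map ⇑(e.symm : K →+* K))) hR hL

theorem phiEquiv_coe (e : K ≃+* K) (M : Matrix (Fin n) (Fin n) K) (hM : IsUnit M) :
    ⇑(phiEquiv e M hM) = ⇑(phiHat (e : K →+* K) M) := rfl

end Equiv

section LLevel

variable {n : ℕ}

/-- Abbreviation for the polynomial ring. -/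
abbrev PR (K : Type) [Field K] (n : ℕ) : Type := MvPolynomial (Fin n × Fin n) K

/-- The fraction field of the polynomial ring. -/
abbrev FL (K : Type) [Field K] (n : ℕ) : Type := FractionRing (PR K n)

/-- The automorphism of the fraction field induced by `phiEquiv`. -/
noncomputable def phiL (e : K ≃+* K) (M : Matrix (Fin n) (Fin n) K) (hM : IsUnit M) :
    FL K n ≃+* FL K n :=
  IsFractionRing.ringEquivOfRingEquiv (phiEquiv e M hM)

theorem phiL_algebraMap (e : K ≃+* K) (M : Matrix (Fin n) (Fin n) K) (hM : IsUnit M)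
    (p : PR K n) : phiL e M hM (algebraMap (PR K n) (FL K n) p)
      = algebraMap (PR K n) (FL K n) (phiHat (e : K →+* K) M p) :=
  IsFractionRing.ringEquivOfRingEquiv_algebraMap (phiEquiv e M hM) p

/-- The derivation of the fraction field induced by `derHat`. -/
noncomputable def derL (d : K → K) (Bm : Matrix (Fin n) (Fin n) K)
    (hadd : ∀ x y, d (x + y) = d x + d y)
    (hmul : ∀ x y, d (x * y) = d x * y + x * d y) : FL K n → FL K n :=
  liftDer (PR K n) (derHat d Bm) (fun x y => derHat_add d Bm hadd x y)
    (fun x y => derHat_mul d Bm hadd hmul x y)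

theorem derL_algebraMap (d : K → K) (Bm : Matrix (Fin n) (Fin n) K)
    (hadd : ∀ x y, d (x + y) = d x + d y)
    (hmul : ∀ x y, d (x * y) = d x * y + x * d y) (p : PR K n) :
    derL d Bm hadd hmul (algebraMap (PR K n) (FL K n) p)
      = algebraMap (PR K n) (FL K n) (derHat d Bm p) :=
  liftDer_algebraMap _ _ _ _ p

theorem derL_add (d : K → K) (Bm : Matrix (Fin n) (Fin n) K)
    (hadd : ∀ x y, d (x + y) = d x + d y)
    (hmul : ∀ x y, d (x * y) = d x * y + x * d y) (x y : FL K n) :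
    derL d Bm hadd hmul (x + y) = derL d Bm hadd hmul x + derL d Bm hadd hmul y :=
  liftDer_add _ _ _ _ x y

theorem derL_mul (d : K → K) (Bm : Matrix (Fin n) (Fin n) K)
    (hadd : ∀ x y, d (x + y) = d x + d y)
    (hmul : ∀ x y, d (x * y) = d x * y + x * d y) (x y : FL K n) :
    derL d Bm hadd hmul (x * y) = derL d Bm hadd hmul x * y + x * derL d Bm hadd hmul y :=
  liftDer_mul _ _ _ _ x y

theorem phiL_phiL_comm (e₁ e₂ : K ≃+* K) (M₁ M₂ : Matrix (Fin n) (Fin n) K)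
    (h₁ : IsUnit M₁) (h₂ : IsUnit M₂)
    (he : ∀ a, e₂ (e₁ a) = e₁ (e₂ a)) (hM : M₁.map ⇑e₂ * M₂ = M₂.map ⇑e₁ * M₁) (x : FL K n) :
    phiL e₂ M₂ h₂ (phiL e₁ M₁ h₁ x) = phiL e₁ M₁ h₁ (phiL e₂ M₂ h₂ x) := by
  refine frac_hom_ext (PR K n)
    ((phiL e₂ M₂ h₂ : FL K n →+* FL K n).comp (phiL e₁ M₁ h₁ : FL K n →+* FL K n))
    ((phiL e₁ M₁ h₁ : FL K n →+* FL K n).comp (phiL e₂ M₂ h₂ : FL K n →+* FL K n))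
    (fun p => ?_) x
  simp only [RingHom.coe_comp, Function.comp_apply, RingEquiv.coe_toRingHom]
  rw [phiL_algebraMap, phiL_algebraMap, phiL_algebraMap, phiL_algebraMap]
  exact congrArg _ (phiHat_commute (e₁ : K →+* K) (e₂ : K →+* K) M₁ M₂
    (by ext a; exact he a) hM p)

theorem phiL_derL_comm (e : K ≃+* K) (M : Matrix (Fin n) (Fin n) K) (hM : IsUnit M)
    (d : K → K) (Bm : Matrix (Fin n) (Fin n) K)
    (hadd : ∀ x y, d (x + y) = d x + d y)
    (hmul : ∀ x y, d (x * y) = d x * y + x * d y)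
    (hcomm : ∀ a, e (d a) = d (e a))
    (hmat : Bm.map ⇑e * M = M.map d + M * Bm) (x : FL K n) :
    phiL e M hM (derL d Bm hadd hmul x) = derL d Bm hadd hmul (phiL e M hM x) := by
  have key : ∀ y : FL K n,
      (phiL e M hM).symm (derL d Bm hadd hmul (phiL e M hM y)) = derL d Bm hadd hmul y := by
    refine frac_der_ext (PR K n) _ _ (fun u v => ?_) (fun u v => derL_mul d Bm hadd hmul u v)
      (fun p => ?_)
    · rw [RingEquiv.map_mul (phiL e M hM) u v, derL_mul d Bm hadd hmul,
        RingEquiv.map_add (phiL e M hM).symm, RingEquiv.map_mul (phiL e M hM).symm,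
        RingEquiv.map_mul (phiL e M hM).symm,
        RingEquiv.symm_apply_apply, RingEquiv.symm_apply_apply]
    · rw [phiL_algebraMap, derL_algebraMap,
        ← phiHat_derHat_comm (e : K →+* K) M d Bm hadd hmul hcomm hmat p,
        ← phiL_algebraMap e M hM, RingEquiv.symm_apply_apply, derL_algebraMap]
  have h := key x
  rw [← h, RingEquiv.apply_symm_apply]

theorem derL_derL_comm (d₁ d₂ : K → K) (B₁ B₂ : Matrix (Fin n) (Fin n) K)
    (hadd₁ : ∀ x y, d₁ (x + y) = d₁ x + d₁ y)
    (hmul₁ : ∀ x y, d₁ (x * y) = d₁ x * y + x * d₁ y)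
    (hadd₂ : ∀ x y, d₂ (x + y) = d₂ x + d₂ y)
    (hmul₂ : ∀ x y, d₂ (x * y) = d₂ x * y + x * d₂ y)
    (hcomm : ∀ a, d₁ (d₂ a) = d₂ (d₁ a))
    (hmat : B₂.map d₁ + B₂ * B₁ = B₁.map d₂ + B₁ * B₂) (x : FL K n) :
    derL d₁ B₁ hadd₁ hmul₁ (derL d₂ B₂ hadd₂ hmul₂ x)
      = derL d₂ B₂ hadd₂ hmul₂ (derL d₁ B₁ hadd₁ hmul₁ x) := by
  have key : ∀ y : FL K n,
      derL d₁ B₁ hadd₁ hmul₁ (derL d₂ B₂ hadd₂ hmul₂ y)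
        - derL d₂ B₂ hadd₂ hmul₂ (derL d₁ B₁ hadd₁ hmul₁ y) = (fun _ => (0 : FL K n)) y := by
    refine frac_der_ext (PR K n) _ _ (fun u v => ?_) (fun u v => by simp) (fun p => ?_)
    · simp only [derL_mul d₂ B₂ hadd₂ hmul₂, derL_add d₁ B₁ hadd₁ hmul₁,
        derL_mul d₁ B₁ hadd₁ hmul₁, derL_add d₂ B₂ hadd₂ hmul₂]
      ring
    · simp only [derL_algebraMap]
      rw [derHat_derHat_comm d₁ B₁ hadd₁ hmul₁ d₂ B₂ hadd₂ hmul₂ hcomm hmat p, sub_self]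
  exact sub_eq_zero.mp (key x)

end LLevel

end Stmt6Aux

open Stmt6Aux

theorem statement6 {n q r m : ℕ} (hn : 1 ≤ n) (K : Type) [Field K] [CharZero K]
    (FK : PhiSigmaDeltaField q r m K)
    (A : Fin q → Matrix (Fin n) (Fin n) K) (hA : ∀ j, IsUnit (A j))
    (B : Fin m → Matrix (Fin n) (Fin n) K)
    (C : Fin r → Matrix (Fin n) (Fin n) K) (hC : ∀ i, IsUnit (C i))
    (int1 : ∀ i j, (A i).map ⇑(FK.φ j) * A j = (A j).map ⇑(FK.φ i) * A i)
    (int2 : ∀ (i : Fin m) (j : Fin q),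
      (B i).map ⇑(FK.φ j) * A j = (A j).map (FK.der i) + A j * B i)
    (int3 : ∀ i j : Fin m,
      (B i).map (FK.der j) - (B j).map (FK.der i) = B j * B i - B i * B j)
    (int4 : ∀ (i : Fin r) (j : Fin q),
      (C i).map ⇑(FK.φ j) * A j = (A j).map ⇑(FK.σ i) * C i)
    (int5 : ∀ (i : Fin m) (j : Fin r),
      (B i).map ⇑(FK.σ j) * C j = (C j).map (FK.der i) + C j * B i)
    (int6 : ∀ i j : Fin r,
      (C i).map ⇑(FK.σ j) * C j = (C j).map ⇑(FK.σ i) * C i) :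
    ∃ (L : Type) (_ : Field L) (_ : CharZero L) (_ : Algebra K L)
      (FL : PhiSigmaDeltaField q r m L),
      (∀ (j : Fin q) (x : K), FL.φ j (algebraMap K L x) = algebraMap K L (FK.φ j x)) ∧
      (∀ (i : Fin r) (x : K), FL.σ i (algebraMap K L x) = algebraMap K L (FK.σ i x)) ∧
      (∀ (i : Fin m) (x : K), FL.der i (algebraMap K L x) = algebraMap K L (FK.der i x)) ∧
      ∃ Z : Matrix (Fin n) (Fin n) L, IsUnit Z ∧
        (∀ j : Fin q, Z.map ⇑(FL.φ j) = (A j).map (algebraMap K L) * Z) ∧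
        (∀ i : Fin m, Z.map (FL.der i) = (B i).map (algebraMap K L) * Z) ∧
        (∀ k : Fin r, Z.map ⇑(FL.σ k) = (C k).map (algebraMap K L) * Z) := by
  classical
  letI : Algebra K (FL K n) :=
    ((algebraMap (PR K n) (FL K n)).comp (MvPolynomial.C : K →+* PR K n)).toAlgebra
  have halg : ∀ x : K, algebraMap K (FL K n) x
      = algebraMap (PR K n) (FL K n) (MvPolynomial.C x) := fun x => rfl
  haveI hCZ : CharZero (FL K n) := by
    refine charZero_of_injective_algebraMap (R := K) ?_
    have h1 : Function.Injective (algebraMap (PR K n) (FL K n)) :=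
      IsFractionRing.injective _ _
    have h2 : Function.Injective (MvPolynomial.C : K → PR K n) :=
      MvPolynomial.C_injective _ _
    intro a b hab
    exact h2 (h1 hab)
  have h3 : ∀ i j : Fin m,
      (B j).map (FK.der i) + B j * B i = (B i).map (FK.der j) + B i * B j := by
    intro i j
    have h := sub_eq_sub_iff_add_eq_add.mp (int3 i j)
    rw [add_comm ((B j).map (FK.der i)) (B j * B i)]
    exact h.symm
  -- the generic fundamental matrix
  set Zm : Matrix (Fin n) (Fin n) (FL K n)
    := (Xm K n).map (algebraMap (PR K n) (FL K n)) with hZm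
  have hmapev : (Xm K n).map
      ⇑(MvPolynomial.eval (fun v : Fin n × Fin n => if v.1 = v.2 then (1 : K) else 0)) = 1 := by
    refine Matrix.ext fun a b => ?_
    simp only [Xm, Matrix.map_apply, Matrix.of_apply, MvPolynomial.eval_X, Matrix.one_apply]
  have hdetX : (Xm K n).det ≠ 0 := by
    intro h0
    have hd := RingHom.map_det
      (MvPolynomial.eval (fun v : Fin n × Fin n => if v.1 = v.2 then (1 : K) else 0)) (Xm K n)
    rw [RingHom.mapMatrix_apply, hmapev, Matrix.det_one] at hd
    rw [h0, map_zero] at hd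
    exact zero_ne_one hd
  have hZdet : Zm.det = algebraMap (PR K n) (FL K n) (Xm K n).det :=
    (RingHom.map_det _ _).symm
  have hZdu : IsUnit Zm.det := by
    rw [hZdet]
    refine isUnit_iff_ne_zero.mpr fun h => hdetX ?_
    exact (IsFractionRing.to_map_eq_zero_iff (K := FL K n)).mp h
  have hZu : IsUnit Zm := (Matrix.isUnit_iff_isUnit_det Zm).mpr hZdu
  have hmapgen : ∀ M : Matrix (Fin n) (Fin n) K,
      (gm M).map (algebraMap (PR K n) (FL K n)) = M.map (algebraMap K (FL K n)) * Zm := by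
    intro M
    rw [show gm M = M.map MvPolynomial.C * Xm K n from rfl,
      Matrix.map_mul (f := algebraMap (PR K n) (FL K n)), Matrix.map_map, hZm]
    rfl
  have heqφ : ∀ (e : K ≃+* K) (M : Matrix (Fin n) (Fin n) K) (hM : IsUnit M),
      Zm.map ⇑(phiL e M hM) = M.map (algebraMap K (FL K n)) * Zm := by
    intro e M hM
    rw [hZm, Matrix.map_map]
    have hfun : (⇑(phiL e M hM) ∘ ⇑(algebraMap (PR K n) (FL K n)))
        = (⇑(algebraMap (PR K n) (FL K n)) ∘ ⇑(phiHat (e : K →+* K) M)) := by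
      funext p
      exact phiL_algebraMap e M hM p
    rw [hfun, ← Matrix.map_map, phiHat_Xm, hmapgen]
  have heqd : ∀ (d : K → K) (Bm : Matrix (Fin n) (Fin n) K)
      (hadd : ∀ x y, d (x + y) = d x + d y)
      (hmul : ∀ x y, d (x * y) = d x * y + x * d y),
      Zm.map (derL d Bm hadd hmul) = Bm.map (algebraMap K (FL K n)) * Zm := by
    intro d Bm hadd hmul
    rw [hZm, Matrix.map_map]
    have hfun : ((derL d Bm hadd hmul) ∘ ⇑(algebraMap (PR K n) (FL K n)))
        = (⇑(algebraMap (PR K n) (FL K n)) ∘ (derHat d Bm)) := by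
      funext p
      exact derL_algebraMap d Bm hadd hmul p
    rw [hfun, ← Matrix.map_map, derHat_Xm d Bm hadd hmul, hmapgen]
  refine ⟨FL K n, inferInstance, hCZ, inferInstance,
    { φ := fun j => phiL (FK.φ j) (A j) (hA j)
      σ := fun i => phiL (FK.σ i) (C i) (hC i)
      der := fun i => derL (FK.der i) (B i) (FK.der_add i) (FK.der_mul i)
      der_add := fun i x y => derL_add _ _ _ _ x y
      der_mul := fun i x y => derL_mul _ _ _ _ x y
      comm_φφ := fun i j x => phiL_phiL_comm (FK.φ j) (FK.φ i) (A j) (A i) (hA j) (hA i)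
        (fun a => FK.comm_φφ i j a) (int1 j i) x
      comm_φσ := fun i j x => phiL_phiL_comm (FK.σ j) (FK.φ i) (C j) (A i) (hC j) (hA i)
        (fun a => FK.comm_φσ i j a) (int4 j i) x
      comm_σσ := fun i j x => phiL_phiL_comm (FK.σ j) (FK.σ i) (C j) (C i) (hC j) (hC i)
        (fun a => FK.comm_σσ i j a) (int6 j i) x
      comm_φder := fun i j x => phiL_derL_comm (FK.φ i) (A i) (hA i) (FK.der j) (B j)
        (FK.der_add j) (FK.der_mul j) (fun a => FK.comm_φder i j a) (int2 j i) x
      comm_σder := fun i j x => phiL_derL_comm (FK.σ i) (C i) (hC i) (FK.der j) (B j)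
        (FK.der_add j) (FK.der_mul j) (fun a => FK.comm_σder i j a) (int5 j i) x
      comm_derder := fun i j x => derL_derL_comm (FK.der i) (FK.der j) (B i) (B j)
        (FK.der_add i) (FK.der_mul i) (FK.der_add j) (FK.der_mul j)
        (fun a => FK.comm_derder i j a) (h3 i j) x },
    ?_, ?_, ?_, ⟨Zm, hZu, ?_, ?_, ?_⟩⟩
  · intro j x
    rw [halg, phiL_algebraMap, phiHat_C, ← halg]
    rfl
  · intro i x
    rw [halg, phiL_algebraMap, phiHat_C, ← halg]
    rfl
  · intro i x
    rw [halg]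
    show derL (FK.der i) (B i) (FK.der_add i) (FK.der_mul i)
        (algebraMap (PR K n) (FL K n) (MvPolynomial.C x)) = _
    rw [derL_algebraMap, derHat_C (FK.der i) (B i) (FK.der_add i), ← halg]
  · intro j
    exact heqφ (FK.φ j) (A j) (hA j)
  · intro i
    exact heqd (FK.der i) (B i) (FK.der_add i) (FK.der_mul i)
  · intro k
    exact heqφ (FK.σ k) (C k) (hC k)
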